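/- (Uniqueness of the unit-jump response.) Let α ∈ (-1,1) and β⁻, β⁺ > 0, and set D = β⁺(α+1) + β⁻(1-α). Suppose v : ℝ → ℝ is twice differentiable with v'' = 0 on (-1,α) and on (α,1), continuous on [-1,α) and on (α,1] with v(-1) = 0 and v(1) = 0, the one-sided limits of v and v' at α exist, v satisfies flux continuity lim_{x→α⁻} β⁻·v'(x) = lim_{x→α⁺} β⁺·v'(x), and v has unit jump lim_{x→α⁻} v(x) − lim_{x→α⁺} v(x) = 1. Then v(x) = (β⁺/D)(x+1) for all x ∈ [-1,α) and v(x) = (β⁻/D)(x-1) for all x ∈ (α,1]; i.e., v coincides with the explicit unit-jump response of the operator on [-1,α) ∪ (α,1]. -/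

import Mathlib

open Set Filter

private lemma const_on_Ioo {f : ℝ → ℝ} {p q : ℝ}
    (h : ∀ x ∈ Ioo p q, DifferentiableAt ℝ f x ∧ deriv f x = 0) :
    ∀ x ∈ Ioo p q, ∀ y ∈ Ioo p q, f x = f y := by
  intro x hx y hy
  apply (convex_Ioo p q).is_const_of_fderivWithin_eq_zero
    (fun z hz => (h z hz).1.differentiableWithinAt) ?_ hx hy
  intro z hz
  rw [fderivWithin_of_isOpen isOpen_Ioo hz]
  have hd : HasDerivAt f 0 z := by
    have := (h z hz).1.hasDerivAt
    rwa [(h z hz).2] at this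
  rw [hd.hasFDerivAt.fderiv]
  ext
  simp

private lemma exists_affine {f : ℝ → ℝ} {p q : ℝ} (hpq : p < q)
    (h : ∀ x ∈ Ioo p q, DifferentiableAt ℝ f x ∧ DifferentiableAt ℝ (deriv f) x ∧
      deriv (deriv f) x = 0) :
    ∃ a b, (∀ x ∈ Ioo p q, f x = a * x + b) ∧ (∀ x ∈ Ioo p q, deriv f x = a) := by
  have hx₀ : (p + q) / 2 ∈ Ioo p q := ⟨by linarith, by linarith⟩
  set x₀ := (p + q) / 2
  have hderiv : ∀ x ∈ Ioo p q, deriv f x = deriv f x₀ :=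
    fun x hx => const_on_Ioo (fun z hz => ⟨(h z hz).2.1, (h z hz).2.2⟩) x hx x₀ hx₀
  refine ⟨deriv f x₀, f x₀ - deriv f x₀ * x₀, ?_, hderiv⟩
  set a := deriv f x₀
  have hg : ∀ x ∈ Ioo p q, f x - a * x = f x₀ - a * x₀ := by
    intro x hx
    refine const_on_Ioo (f := fun x => f x - a * x) ?_ x hx x₀ hx₀
    intro z hz
    have hd : DifferentiableAt ℝ (fun x => f x - a * x) z :=
      (h z hz).1.sub (differentiableAt_id.const_mul a)
    refine ⟨hd, ?_⟩
    have : HasDerivAt (fun x => f x - a * x) (deriv f z - a) z := by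
      exact ((h z hz).1.hasDerivAt.sub ((hasDerivAt_id z).const_mul a)).congr_deriv (by ring)
    rw [this.deriv, hderiv z hz]
    ring
  intro x hx
  have := hg x hx
  linarith

/-- Uniqueness of the unit-jump response: any solution of the homogeneous interface problem
with unit jump coincides with the explicit piecewise-linear unit-jump response. -/
theorem stmt_12 (α βm βp : ℝ) (hα : α ∈ Ioo (-1 : ℝ) 1) (hβm : 0 < βm) (hβp : 0 < βp)
    (D : ℝ) (hD : D = βp * (α + 1) + βm * (1 - α))
    (v : ℝ → ℝ) (vm vp dm dp : ℝ)
    (hdiff₁ : ∀ x ∈ Ioo (-1 : ℝ) α, DifferentiableAt ℝ v x ∧ DifferentiableAt ℝ (deriv v) x ∧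
        deriv (deriv v) x = 0)
    (hdiff₂ : ∀ x ∈ Ioo α (1 : ℝ), DifferentiableAt ℝ v x ∧ DifferentiableAt ℝ (deriv v) x ∧
        deriv (deriv v) x = 0)
    (hcont₁ : ContinuousOn v (Ico (-1 : ℝ) α))
    (hcont₂ : ContinuousOn v (Ioc α (1 : ℝ)))
    (hbc₁ : v (-1) = 0) (hbc₂ : v 1 = 0)
    (hvm : Tendsto v (nhdsWithin α (Ioo (-1 : ℝ) α)) (nhds vm))
    (hvp : Tendsto v (nhdsWithin α (Ioo α (1 : ℝ))) (nhds vp))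
    (hdm : Tendsto (deriv v) (nhdsWithin α (Ioo (-1 : ℝ) α)) (nhds dm))
    (hdp : Tendsto (deriv v) (nhdsWithin α (Ioo α (1 : ℝ))) (nhds dp))
    (hflux : βm * dm = βp * dp)
    (hjump : vm - vp = 1) :
    (∀ x ∈ Ico (-1 : ℝ) α, v x = (βp / D) * (x + 1)) ∧
    (∀ x ∈ Ioc α (1 : ℝ), v x = (βm / D) * (x - 1)) := by
  obtain ⟨hα1, hα2⟩ := hα
  have hDpos : 0 < D := by
    rw [hD]; nlinarith
  obtain ⟨a, b, hv₁, hd₁⟩ := exists_affine hα1 hdiff₁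
  obtain ⟨c, d, hv₂, hd₂⟩ := exists_affine hα2 hdiff₂
  -- NeBot instances
  haveI hne₁ : (nhdsWithin α (Ioo (-1 : ℝ) α)).NeBot := by
    rw [← mem_closure_iff_nhdsWithin_neBot, closure_Ioo (by linarith : (-1:ℝ) ≠ α)]
    exact ⟨hα1.le, le_refl α⟩
  haveI hne₂ : (nhdsWithin α (Ioo α (1 : ℝ))).NeBot := by
    rw [← mem_closure_iff_nhdsWithin_neBot, closure_Ioo (by linarith : α ≠ (1:ℝ))]
    exact ⟨le_refl α, hα2.le⟩
  haveI hne₃ : (nhdsWithin (-1 : ℝ) (Ioo (-1 : ℝ) α)).NeBot := by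
    rw [← mem_closure_iff_nhdsWithin_neBot, closure_Ioo (by linarith : (-1:ℝ) ≠ α)]
    exact ⟨le_refl _, hα1.le⟩
  haveI hne₄ : (nhdsWithin (1 : ℝ) (Ioo α (1 : ℝ))).NeBot := by
    rw [← mem_closure_iff_nhdsWithin_neBot, closure_Ioo (by linarith : α ≠ (1:ℝ))]
    exact ⟨hα2.le, le_refl _⟩
  -- identify limits
  have hdm' : dm = a := by
    refine tendsto_nhds_unique hdm (tendsto_const_nhds.congr' ?_)
    filter_upwards [self_mem_nhdsWithin] with x hx using (hd₁ x hx).symm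
  have hdp' : dp = c := by
    refine tendsto_nhds_unique hdp (tendsto_const_nhds.congr' ?_)
    filter_upwards [self_mem_nhdsWithin] with x hx using (hd₂ x hx).symm
  have haff₁ : Tendsto (fun x : ℝ => a * x + b) (nhds α) (nhds (a * α + b)) :=
    ((continuous_const.mul continuous_id).add continuous_const).tendsto α
  have haff₂ : Tendsto (fun x : ℝ => c * x + d) (nhds α) (nhds (c * α + d)) :=
    ((continuous_const.mul continuous_id).add continuous_const).tendsto α
  have hvm' : vm = a * α + b := by
    refine tendsto_nhds_unique hvm ((haff₁.mono_left nhdsWithin_le_nhds).congr' ?_)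
    filter_upwards [self_mem_nhdsWithin] with x hx using (hv₁ x hx).symm
  have hvp' : vp = c * α + d := by
    refine tendsto_nhds_unique hvp ((haff₂.mono_left nhdsWithin_le_nhds).congr' ?_)
    filter_upwards [self_mem_nhdsWithin] with x hx using (hv₂ x hx).symm
  -- boundary conditions
  have he₁ : a * (-1) + b = 0 := by
    have h1 : Tendsto v (nhdsWithin (-1:ℝ) (Ioo (-1:ℝ) α)) (nhds 0) := by
      rw [← hbc₁]
      exact ((hcont₁ (-1) ⟨le_refl _, hα1⟩).mono Ioo_subset_Ico_self).tendsto
    have h2 : Tendsto v (nhdsWithin (-1:ℝ) (Ioo (-1:ℝ) α)) (nhds (a * (-1) + b)) := by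
      refine Tendsto.congr' ?_ ((((continuous_const.mul continuous_id).add
        continuous_const).tendsto (-1:ℝ)).mono_left nhdsWithin_le_nhds)
      filter_upwards [self_mem_nhdsWithin] with x hx using (hv₁ x hx).symm
    exact (tendsto_nhds_unique h2 h1)
  have he₂ : c * 1 + d = 0 := by
    have h1 : Tendsto v (nhdsWithin (1:ℝ) (Ioo α (1:ℝ))) (nhds 0) := by
      rw [← hbc₂]
      exact ((hcont₂ 1 ⟨hα2, le_refl _⟩).mono Ioo_subset_Ioc_self).tendsto
    have h2 : Tendsto v (nhdsWithin (1:ℝ) (Ioo α (1:ℝ))) (nhds (c * 1 + d)) := by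
      refine Tendsto.congr' ?_ ((((continuous_const.mul continuous_id).add
        continuous_const).tendsto (1:ℝ)).mono_left nhdsWithin_le_nhds)
      filter_upwards [self_mem_nhdsWithin] with x hx using (hv₂ x hx).symm
    exact (tendsto_nhds_unique h2 h1)
  -- solve the linear system
  rw [hdm', hdp'] at hflux
  rw [hvm', hvp'] at hjump
  have ejump : a * (α + 1) + c * (1 - α) = 1 := by nlinarith [he₁, he₂, hjump]
  have hcD : c * D = βm := by linear_combination c * hD + βm * ejump - (α + 1) * hflux
  have haD : a * D = βp := by
    have h1 : βm * (a * D) = βm * βp := by linear_combination D * hflux + βp * hcD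
    exact mul_left_cancel₀ hβm.ne' h1
  have ha : a = βp / D := by rw [eq_div_iff hDpos.ne']; exact haD
  have hc : c = βm / D := by rw [eq_div_iff hDpos.ne']; exact hcD
  have hb : b = a := by linarith
  have hd' : d = -c := by linarith
  constructor
  · intro x hx
    rcases eq_or_lt_of_le hx.1 with rfl | hlt
    · rw [hbc₁]; ring
    · rw [hv₁ x ⟨hlt, hx.2⟩, hb, ha]; ring
  · intro x hx
    rcases eq_or_lt_of_le hx.2 with rfl | hlt
    · rw [hbc₂]; ring
    · rw [hv₂ x ⟨hx.1, hlt⟩, hd', hc]; ring
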